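/- Let p > 2 be a real number, n a positive integer, and let α_1,…,α_n be real numbers with α_i ≥ 1/(2n) for all i and ∑_{i=1}^n α_i = 1. Let u_1,…,u_n ∈ [0,1] and suppose the number of indices i with u_i > 1/2 is strictly greater than n/2. Then ∑_{i=1}^n α_i·((1+u_i)^p + (1−u_i)^p)/(2(1+u_i^p)) ≥ 1 + (2^{p−2} − 1)·2^{−p−2}. -/

import Mathlib

set_option maxHeartbeats 1000000

open Real

private lemma aux_super {q a b : ℝ} (hq : 1 ≤ q) (ha : 0 ≤ a) (hb : 0 ≤ b) :
    a ^ q + b ^ q ≤ (a + b) ^ q := by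
  have h := NNReal.add_rpow_le_rpow_add ⟨a, ha⟩ ⟨b, hb⟩ hq
  have h2 := NNReal.coe_le_coe.2 h
  exact h2

private lemma aux_deriv (p : ℝ) (hp : 2 < p) (x : ℝ) :
    HasDerivAt (fun u : ℝ => (1 + u) ^ p + (1 - u) ^ p - 2 * u ^ p)
      (p * (1 + x) ^ (p - 1) * 1 + p * (1 - x) ^ (p - 1) * (-1) - 2 * (p * x ^ (p - 1))) x := by
  have hp1 : (1 : ℝ) ≤ p := by linarith
  have h1 : HasDerivAt (fun u : ℝ => (1 + u) ^ p) (p * (1 + x) ^ (p - 1) * 1) x := by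
    have := (((hasDerivAt_const x (1:ℝ)).add (hasDerivAt_id x)).rpow_const
      (Or.inr hp1))
    simpa [mul_comm] using this
  have h2 : HasDerivAt (fun u : ℝ => (1 - u) ^ p) (p * (1 - x) ^ (p - 1) * (-1)) x := by
    have := (((hasDerivAt_const x (1:ℝ)).sub (hasDerivAt_id x)).rpow_const
      (Or.inr hp1))
    simpa [mul_comm] using this
  have h3 : HasDerivAt (fun u : ℝ => 2 * u ^ p) (2 * (p * x ^ (p - 1))) x := by
    exact (Real.hasDerivAt_rpow_const (Or.inr hp1)).const_mul 2
  exact (h1.add h2).sub h3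

private lemma aux_mono (p : ℝ) (hp : 2 < p) :
    MonotoneOn (fun u : ℝ => (1 + u) ^ p + (1 - u) ^ p - 2 * u ^ p) (Set.Icc 0 1) := by
  apply monotoneOn_of_deriv_nonneg (convex_Icc 0 1)
  · exact fun x _ => ((aux_deriv p hp x).continuousAt).continuousWithinAt
  · intro x hx
    exact ((aux_deriv p hp x).differentiableAt).differentiableWithinAt
  · intro x hx
    rw [interior_Icc] at hx
    rw [(aux_deriv p hp x).deriv]
    have hx0 : (0:ℝ) < x := hx.1
    have hx1 : x < 1 := hx.2
    have hq1 : (1:ℝ) ≤ p - 1 := by linarith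
    have hsup : (2 * x) ^ (p - 1) + (1 - x) ^ (p - 1) ≤ (1 + x) ^ (p - 1) := by
      have := aux_super hq1 (by linarith : (0:ℝ) ≤ 2 * x) (by linarith : (0:ℝ) ≤ 1 - x)
      have he : 2 * x + (1 - x) = 1 + x := by ring
      rwa [he] at this
    have h2x : (2 * x) ^ (p - 1) = 2 ^ (p - 1) * x ^ (p - 1) :=
      Real.mul_rpow (by norm_num) hx0.le
    have h2ge : (2:ℝ) ≤ 2 ^ (p - 1) := by
      calc (2:ℝ) = 2 ^ (1:ℝ) := (Real.rpow_one 2).symm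
        _ ≤ 2 ^ (p - 1) := Real.rpow_le_rpow_left_iff (by norm_num) |>.2 (by linarith)
    have hxp : (0:ℝ) ≤ x ^ (p - 1) := Real.rpow_nonneg hx0.le _
    have hp0 : (0:ℝ) < p := by linarith
    nlinarith [mul_le_mul_of_nonneg_right h2ge hxp]

private lemma aux_B (p : ℝ) (hp : 2 < p) :
    (3:ℝ) - 2 ^ (2 - p) ≤ (3 / 2 : ℝ) ^ p - (1 / 2 : ℝ) ^ p := by
  -- reduce to (3/2)^p + 3*(1/2)^p ≥ 3, using 2^(2-p) = 4 * (1/2)^p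
  have h2 : (2:ℝ) ^ (2 - p) = 4 * (1 / 2 : ℝ) ^ p := by
    rw [show (1/2 : ℝ) = 2⁻¹ by norm_num, Real.inv_rpow (by norm_num), ← Real.rpow_neg (by norm_num)]
    rw [show (2 - p : ℝ) = 2 + (-p) by ring, Real.rpow_add (by norm_num)]
    norm_num
  rw [h2]
  have key : (3:ℝ) ≤ (3 / 2 : ℝ) ^ p + 3 * (1 / 2 : ℝ) ^ p := by
    have hs : (0:ℝ) ≤ p - 2 := by linarith
    have e1 : (3/2 : ℝ) ^ p = (9/4) * (3/2 : ℝ) ^ (p - 2) := by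
      rw [show p = 2 + (p - 2) by ring, Real.rpow_add (by norm_num)]
      norm_num [Real.rpow_two]
    have e2 : (1/2 : ℝ) ^ p = (1/4) * (1/2 : ℝ) ^ (p - 2) := by
      rw [show p = 2 + (p - 2) by ring, Real.rpow_add (by norm_num)]
      norm_num [Real.rpow_two]
    have b1 : 1 + (p - 2) * Real.log (3/2) ≤ (3/2 : ℝ) ^ (p - 2) := by
      rw [Real.rpow_def_of_pos (by norm_num)]
      have := Real.add_one_le_exp (Real.log (3/2) * (p - 2))
      nlinarith [this]
    have b2 : 1 + (p - 2) * Real.log (1/2) ≤ (1/2 : ℝ) ^ (p - 2) := by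
      rw [Real.rpow_def_of_pos (by norm_num)]
      have := Real.add_one_le_exp (Real.log (1/2) * (p - 2))
      nlinarith [this]
    have hlogs : 0 ≤ 9 * Real.log (3/2) + 3 * Real.log (1/2) := by
      have : 9 * Real.log (3/2) + 3 * Real.log (1/2) = 3 * Real.log (27/16) := by
        rw [show (27/16 : ℝ) = (3/2)^3 * (1/2) by norm_num, Real.log_mul (by positivity) (by norm_num),
          Real.log_pow]
        push_cast; ring
      rw [this]
      have : (0:ℝ) ≤ Real.log (27/16) := Real.log_nonneg (by norm_num)
      linarith
    rw [e1, e2]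
    nlinarith [mul_le_mul_of_nonneg_left b1 (by norm_num : (0:ℝ) ≤ 9/4),
      mul_le_mul_of_nonneg_left b2 (by norm_num : (0:ℝ) ≤ 3/4)]
  linarith

theorem stmt_16 (p : ℝ) (hp : 2 < p) (n : ℕ) (hn : 0 < n) (α u : Fin n → ℝ)
    (hα : ∀ i, 1 / (2 * (n : ℝ)) ≤ α i) (hsum : ∑ i, α i = 1)
    (hu : ∀ i, u i ∈ Set.Icc (0 : ℝ) 1)
    (hcard : (n : ℝ) / 2 < (Finset.univ.filter fun i => 1 / 2 < u i).card) :
    ∑ i, α i * (((1 + u i) ^ p + (1 - u i) ^ p) / (2 * (1 + u i ^ p))) ≥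
      1 + ((2:ℝ) ^ (p - 2) - 1) * (2:ℝ) ^ (-p - 2) := by
  have hnR : (0:ℝ) < n := Nat.cast_pos.2 hn
  set δ : ℝ := ((2:ℝ) ^ (p - 2) - 1) * (2:ℝ) ^ (-p) with hδ
  have hδ0 : 0 ≤ δ := by
    have h1 : (1:ℝ) ≤ (2:ℝ) ^ (p - 2) := by
      calc (1:ℝ) = (2:ℝ) ^ (0:ℝ) := (Real.rpow_zero 2).symm
        _ ≤ _ := Real.rpow_le_rpow_left_iff (by norm_num) |>.2 (by linarith)
    have h2 : (0:ℝ) < (2:ℝ) ^ (-p) := Real.rpow_pos_of_pos (by norm_num) _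
    nlinarith
  -- relation: δ * 4 = 1 - 2^(2-p)
  have E2 : (2:ℝ) ^ (p - 2) * (2:ℝ) ^ (-p) = 1/4 := by
    rw [← Real.rpow_add (by norm_num), show (p - 2 + -p : ℝ) = -2 by ring,
      show (-2:ℝ) = ((-2 : ℤ) : ℝ) by norm_num, Real.rpow_intCast]; norm_num
  have E3 : (2:ℝ) ^ (2 - p) = 4 * (2:ℝ) ^ (-p) := by
    rw [show (2 - p : ℝ) = 2 + -p by ring, Real.rpow_add (by norm_num)]
    norm_num
  have hδ4 : δ * 4 = 1 - (2:ℝ) ^ (2 - p) := by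
    rw [hδ, E3]; nlinarith [E2]
  have E4 : (2:ℝ) ^ (-p - 2) = (2:ℝ) ^ (-p) / 4 := by
    rw [show (-p - 2 : ℝ) = -p + (-2) by ring, Real.rpow_add (by norm_num),
      show (-2:ℝ) = ((-2 : ℤ) : ℝ) by norm_num, Real.rpow_intCast]
    norm_num
    ring
  have hRHS : ((2:ℝ) ^ (p - 2) - 1) * (2:ℝ) ^ (-p - 2) = δ / 4 := by
    rw [hδ, E4]; ring
  -- pointwise bounds
  have key : ∀ i, α i + (if 1/2 < u i then δ / (2 * n) else 0) ≤
      α i * (((1 + u i) ^ p + (1 - u i) ^ p) / (2 * (1 + u i ^ p))) := by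
    intro i
    obtain ⟨hu0, hu1⟩ := hu i
    have hαi : 1 / (2 * (n:ℝ)) ≤ α i := hα i
    have hαpos : 0 < α i := lt_of_lt_of_le (by positivity) hαi
    have hup0 : 0 ≤ u i ^ p := Real.rpow_nonneg hu0 _
    have hup1 : u i ^ p ≤ 1 := Real.rpow_le_one hu0 hu1 (by linarith)
    have hD : (0:ℝ) < 2 * (1 + u i ^ p) := by linarith
    have hmono := aux_mono p hp
    have hbase : (2:ℝ) ≤ (1 + u i) ^ p + (1 - u i) ^ p - 2 * u i ^ p := by
      have h0 : ((1:ℝ) + 0) ^ p + (1 - 0) ^ p - 2 * (0:ℝ) ^ p = 2 := by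
        rw [Real.zero_rpow (by linarith)]; norm_num
      have hm := hmono (Set.mem_Icc.2 ⟨le_refl 0, by norm_num⟩)
        (Set.mem_Icc.2 ⟨hu0, hu1⟩) hu0
      beta_reduce at hm
      rw [h0] at hm
      exact hm
    by_cases hbig : 1/2 < u i
    · simp only [if_pos hbig]
      have hbig2 : (1 + u i) ^ p + (1 - u i) ^ p - 2 * u i ^ p ≥ (3:ℝ) - 2 ^ (2 - p) := by
        have hhalf : ((1:ℝ) + 1/2) ^ p + (1 - 1/2 : ℝ) ^ p - 2 * (1/2 : ℝ) ^ p =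
            (3/2 : ℝ) ^ p - (1/2 : ℝ) ^ p := by norm_num; ring
        have hm := hmono (Set.mem_Icc.2 ⟨by norm_num, by norm_num⟩)
          (Set.mem_Icc.2 ⟨hu0, hu1⟩) hbig.le
        have := aux_B p hp
        simp only [hhalf] at hm
        linarith
      -- f ≥ 1 + δ
      have hf : 1 + δ ≤ ((1 + u i) ^ p + (1 - u i) ^ p) / (2 * (1 + u i ^ p)) := by
        rw [le_div_iff₀ hD]
        nlinarith [mul_le_mul_of_nonneg_left (by linarith : 2 * (1 + u i ^ p) ≤ 4) hδ0]
      have h1 : α i * (1 + δ) ≤ α i * _ := mul_le_mul_of_nonneg_left hf hαpos.le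
      have h2 : α i + δ / (2 * n) ≤ α i * (1 + δ) := by
        have := mul_le_mul_of_nonneg_right hαi hδ0
        have hne : (2 * (n:ℝ)) ≠ 0 := by positivity
        have : δ / (2 * n) ≤ α i * δ := by
          rw [div_eq_mul_inv, mul_comm]
          calc (2 * (n:ℝ))⁻¹ * δ = 1 / (2 * (n:ℝ)) * δ := by rw [one_div]
            _ ≤ α i * δ := mul_le_mul_of_nonneg_right hαi hδ0
        nlinarith
      linarith
    · simp only [if_neg hbig, add_zero]
      have hf : 1 ≤ ((1 + u i) ^ p + (1 - u i) ^ p) / (2 * (1 + u i ^ p)) := by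
        rw [le_div_iff₀ hD]; linarith
      nlinarith
  have hsum2 := Finset.sum_le_sum (fun i (_ : i ∈ Finset.univ) => key i)
  rw [Finset.sum_add_distrib, hsum] at hsum2
  have hite : ∑ i : Fin n, (if 1/2 < u i then δ / (2 * n) else 0) =
      ((Finset.univ.filter fun i => 1/2 < u i).card : ℝ) * (δ / (2 * n)) := by
    rw [← Finset.sum_filter, Finset.sum_const, nsmul_eq_mul]
  rw [hite] at hsum2
  have hfinal : δ / 4 ≤ ((Finset.univ.filter fun i => 1/2 < u i).card : ℝ) * (δ / (2 * n)) := by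
    have h1 : (n:ℝ) / 2 * (δ / (2 * n)) ≤
        ((Finset.univ.filter fun i => 1/2 < u i).card : ℝ) * (δ / (2 * n)) :=
      mul_le_mul_of_nonneg_right hcard.le (by positivity)
    have h2 : (n:ℝ) / 2 * (δ / (2 * n)) = δ / 4 := by field_simp; ring
    linarith
  rw [hRHS]
  linarith
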